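/- With G as defined and y ∈ (0,1/2), for every fixed x ∈ (0,1) the derivative bound |∂G/∂y'|_{y'=y_{(x)}}| ≤ (1/2)·log(2(1-y)) + x·log(4)/(2^{2-x} - 2) holds. -/

import Mathlib

set_option maxHeartbeats 1000000

/-- Two-point (Bernoulli) Kullback–Leibler divergence (natural log). -/
noncomputable def klBer (a b : ℝ) : ℝ :=
  a * Real.log (a / b) + (1 - a) * Real.log ((1 - a) / (1 - b))

/-- Binary entropy (base 2). -/
noncomputable def binEnt (x : ℝ) : ℝ := -x * Real.logb 2 x - (1 - x) * Real.logb 2 (1 - x)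

/-- `y_{(x)} = y + (1-y)(2^{1-x} - 1)`. -/
noncomputable def yOf (y x : ℝ) : ℝ := y + (1 - y) * ((2 : ℝ) ^ (1 - x) - 1)

/-- The function `G(y, y', x)`. -/
noncomputable def Gfun (y y' x : ℝ) : ℝ :=
  x / 2 * klBer y (1 / 2) + y' * klBer (y / y') ((2 : ℝ) ^ (-(1 - x)))
    - klBer y (1 / 2) + 1 / 2 * klBer y' ((2 : ℝ) ^ (-x))

/-- `Ğ(y,x) = G(y, y_{(x)}, x)`. -/
noncomputable def Gbr (y x : ℝ) : ℝ := Gfun y (yOf y x) x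

/-- Key elementary inequality: for `0 < t ≤ 1`, `t log(1/t) ≤ (t+2) log(2/(1+t))`. -/
lemma key_ineq {t : ℝ} (ht0 : 0 < t) (ht1 : t ≤ 1) :
    -(t * Real.log t) ≤ (t + 2) * (Real.log 2 - Real.log (1 + t)) := by
  have hs0 : 0 < Real.sqrt t := Real.sqrt_pos.2 ht0
  have hss : Real.sqrt t * Real.sqrt t = t := Real.mul_self_sqrt ht0.le
  set s := Real.sqrt t with hs
  have hs1 : s ≤ 1 := by nlinarith
  have hlt : t * Real.log t = 2 * (t * Real.log s) := by
    rw [show Real.log t = Real.log (s * s) from by rw [hss],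
      Real.log_mul hs0.ne' hs0.ne']; ring
  have h2 : Real.log s⁻¹ ≤ s⁻¹ - 1 := Real.log_le_sub_one_of_pos (inv_pos.2 hs0)
  rw [Real.log_inv] at h2
  have h3 : Real.log ((1 + t) / 2) ≤ (1 + t) / 2 - 1 :=
    Real.log_le_sub_one_of_pos (by linarith)
  rw [Real.log_div (by linarith) two_ne_zero] at h3
  have h5 : t * -Real.log s ≤ t * (s⁻¹ - 1) := mul_le_mul_of_nonneg_left h2 ht0.le
  have h6 : t * s⁻¹ = s := by
    field_simp
    nlinarith
  have h4 : -(t * Real.log t) ≤ 2 * (s - t) := by nlinarith [h5, h6, hlt]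
  have h7 : (t + 2) * ((1 - t) / 2) ≤ (t + 2) * (Real.log 2 - Real.log (1 + t)) :=
    mul_le_mul_of_nonneg_left (by linarith) (by linarith)
  have h8 : 2 * (s - t) ≤ (t + 2) * ((1 - t) / 2) := by
    nlinarith [mul_nonneg (sub_nonneg.2 hs1)
      (show (0:ℝ) ≤ s^3 + s^2 - 2*s + 2 from by nlinarith [sq_nonneg (s-1), pow_nonneg hs0.le 3]),
      hss]
  linarith

/-- The derivative of `G` in its second argument at the point `y_{(x)}`. -/
lemma Gfun_hasDerivAt (y x : ℝ) (hy0 : 0 < y) (hy : y < 1 / 2) (hx0 : 0 < x) (hx1 : x < 1) :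
    HasDerivAt (fun t => Gfun y t x)
      (1 / 2 * (Real.log (1 - y) + Real.log ((2 : ℝ) ^ (1 - x)) - Real.log (yOf y x)))
      (yOf y x) := by
  have hy1 : y < 1 := by linarith
  have h1y : 0 < 1 - y := by linarith
  set q : ℝ := (2 : ℝ) ^ (1 - x) with hqdef
  have hq0 : 0 < q := Real.rpow_pos_of_pos two_pos _
  have hq1 : 1 < q :=
    (Real.one_lt_rpow_iff_of_pos two_pos).2 (Or.inl ⟨one_lt_two, by linarith⟩)
  have hq2 : q < 2 := by
    have : (2:ℝ) ^ (1 - x) < (2:ℝ) ^ (1:ℝ) :=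
      (Real.rpow_lt_rpow_left_iff one_lt_two).2 (by linarith)
    rwa [Real.rpow_one] at this
  have hb : (2 : ℝ) ^ (-(1 - x)) = q⁻¹ := by
    rw [Real.rpow_neg (by norm_num), hqdef]
  have hc : (2 : ℝ) ^ (-x) = q / 2 := by
    rw [show -x = (1 - x) - 1 by ring, Real.rpow_sub two_pos, Real.rpow_one, hqdef]
  have hpdef : yOf y x = y + (1 - y) * (q - 1) := by simp only [yOf, hqdef]
  set p : ℝ := yOf y x with hpd
  have hpy : y < p := by rw [hpdef]; nlinarith
  have hp0 : 0 < p := hy0.trans hpy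
  have hp1 : p < 1 := by rw [hpdef]; nlinarith
  have hq1' : q - 1 ≠ 0 := by intro h; nlinarith [sub_eq_zero.1 h]
  have hq2' : (2:ℝ) - q ≠ 0 := by intro h; nlinarith [sub_eq_zero.1 h]
  have hB0 : (0:ℝ) < (2 : ℝ) ^ (-(1 - x)) := Real.rpow_pos_of_pos two_pos _
  have hB1 : (2 : ℝ) ^ (-(1 - x)) < 1 := by
    rw [hb]; exact inv_lt_one_of_one_lt₀ hq1
  have hC0 : (0:ℝ) < (2 : ℝ) ^ (-x) := Real.rpow_pos_of_pos two_pos _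
  have hC1 : (2 : ℝ) ^ (-x) < 1 := by rw [hc]; linarith
  have hAp : 0 < 1 - y / p := by rw [sub_pos]; exact (div_lt_one hp0).2 hpy
  have n1 : y / p / (2 : ℝ) ^ (-(1 - x)) ≠ 0 :=
    ne_of_gt (div_pos (div_pos hy0 hp0) hB0)
  have n2 : (1 - y / p) / (1 - (2 : ℝ) ^ (-(1 - x))) ≠ 0 :=
    ne_of_gt (div_pos hAp (by linarith))
  have n3 : p / (2 : ℝ) ^ (-x) ≠ 0 := ne_of_gt (div_pos hp0 hC0)
  have n4 : (1 - p) / (1 - (2 : ℝ) ^ (-x)) ≠ 0 :=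
    ne_of_gt (div_pos (by linarith) (by linarith))
  have hL1v : Real.log (y / p / (2 : ℝ) ^ (-(1 - x)))
      = Real.log y + Real.log q - Real.log p := by
    rw [hb, show y / p / q⁻¹ = y * q / p from by field_simp,
      Real.log_div (by positivity) hp0.ne', Real.log_mul hy0.ne' hq0.ne']
  have hL2v : Real.log ((1 - y / p) / (1 - (2 : ℝ) ^ (-(1 - x))))
      = Real.log (1 - y) + Real.log q - Real.log p := by
    have h1 : 1 - y / p = (1 - y) * (q - 1) / p := by
      field_simp
      linear_combination hpdef
    have h2 : 1 - q⁻¹ = (q - 1) / q := by field_simp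
    have harg : (1 - y / p) / (1 - q⁻¹) = (1 - y) * q / p := by
      rw [h1, h2]
      field_simp
    rw [hb, harg, Real.log_div (by positivity) hp0.ne',
      Real.log_mul h1y.ne' hq0.ne']
  have hL3v : Real.log (p / (2 : ℝ) ^ (-x))
      = Real.log 2 + Real.log p - Real.log q := by
    rw [hc, show p / (q / 2) = 2 * p / q from by field_simp,
      Real.log_div (by positivity) hq0.ne', Real.log_mul two_ne_zero hp0.ne']
  have hL4v : Real.log ((1 - p) / (1 - (2 : ℝ) ^ (-x)))
      = Real.log 2 + Real.log (1 - y) := by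
    have h1 : 1 - p = (1 - y) * (2 - q) := by linear_combination -hpdef
    have h2 : 1 - q / 2 = (2 - q) / 2 := by ring
    have harg : (1 - p) / (1 - q / 2) = 2 * (1 - y) := by
      rw [h1, h2]
      field_simp
    rw [hc, harg, Real.log_mul two_ne_zero h1y.ne']
  have hpy' : p - y ≠ 0 := sub_ne_zero.2 hpy.ne'
  have hy' : y ≠ 0 := hy0.ne'
  have hp' : p ≠ 0 := hp0.ne'
  have hB' : (2 : ℝ) ^ (-(1 - x)) ≠ 0 := hB0.ne'
  have hC' : (2 : ℝ) ^ (-x) ≠ 0 := hC0.ne'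
  have hnB : (1:ℝ) - (2 : ℝ) ^ (-(1 - x)) ≠ 0 := by linarith
  have hexp : (-(1 - x) : ℝ) = -1 + x := by ring
  have hB2' : (2 : ℝ) ^ (-1 + x : ℝ) ≠ 0 := by rw [← hexp]; exact hB'
  have hnB2 : (1:ℝ) - (2 : ℝ) ^ (-1 + x : ℝ) ≠ 0 := by rw [← hexp]; exact hnB
  have hnC : (1:ℝ) - (2 : ℝ) ^ (-x) ≠ 0 := by linarith
  have hnp : (1:ℝ) - p ≠ 0 := by linarith
  have hA : HasDerivAt (fun t => y / t) (-(y / p^2)) p :=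
    ((hasDerivAt_const p y).div (hasDerivAt_id' p) hp0.ne').congr_deriv (by ring)
  have hL1 : HasDerivAt (fun t => Real.log (y / t / (2 : ℝ) ^ (-(1 - x)))) (-(1/p)) p :=
    ((hA.div_const ((2 : ℝ) ^ (-(1 - x)))).log n1).congr_deriv
      (by field_simp)
  have hBf : HasDerivAt (fun t => 1 - y / t) (y / p^2) p :=
    ((hasDerivAt_const p (1:ℝ)).sub hA).congr_deriv (by ring)
  have hL2 : HasDerivAt (fun t => Real.log ((1 - y / t) / (1 - (2 : ℝ) ^ (-(1 - x)))))
      (y / (p * (p - y))) p := by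
    have hcancel : ∀ a b c : ℝ, c ≠ 0 → a / c / (b / c) = a / b := fun a b c hc => by
      rw [div_div_div_comm, div_self hc, div_one]
    refine ((hBf.div_const (1 - (2 : ℝ) ^ (-(1 - x)))).log n2).congr_deriv ?_
    rw [hcancel _ _ _ hnB, show 1 - y / p = (p - y)/p from by field_simp,
      div_div_div_comm, div_div, mul_comm (p - y) (p ^ 2 / p)]
    rw [show p ^ 2 / p = p from by field_simp]
  have hL3 : HasDerivAt (fun t => Real.log (t / (2 : ℝ) ^ (-x))) (1/p) p :=
    (((hasDerivAt_id' p).div_const ((2 : ℝ) ^ (-x))).log n3).congr_deriv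
      (by field_simp)
  have hOne : HasDerivAt (fun t => (1:ℝ) - t) (-1) p :=
    ((hasDerivAt_const p (1:ℝ)).sub (hasDerivAt_id' p)).congr_deriv (by ring)
  have hL4 : HasDerivAt (fun t => Real.log ((1 - t) / (1 - (2 : ℝ) ^ (-x))))
      (-(1/(1 - p))) p := by
    refine ((hOne.div_const (1 - (2 : ℝ) ^ (-x))).log n4).congr_deriv ?_
    field_simp
  have hg := (hasDerivAt_id' p).mul ((hA.mul hL1).add (hBf.mul hL2))
  have hh := (((hasDerivAt_id' p).mul hL3).add (hOne.mul hL4)).const_mul (1/2 : ℝ)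
  have H := (((hasDerivAt_const p (x / 2 * klBer y (1 / 2))).add hg).sub
      (hasDerivAt_const p (klBer y (1 / 2)))).add hh
  have H2 : HasDerivAt (fun t => Gfun y t x) _ p := H
  refine H2.congr_deriv ?_
  simp only [Pi.mul_apply, Pi.add_apply]
  rw [hL1v, hL2v, hL3v, hL4v]
  have hnB : (1:ℝ) - (2 : ℝ) ^ (-(1 - x)) ≠ 0 := by linarith
  have hexp : (-(1 - x) : ℝ) = -1 + x := by ring
  have hB2' : (2 : ℝ) ^ (-1 + x : ℝ) ≠ 0 := by rw [← hexp]; exact hB'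
  have hnB2 : (1:ℝ) - (2 : ℝ) ^ (-1 + x : ℝ) ≠ 0 := by rw [← hexp]; exact hnB
  have hnC : (1:ℝ) - (2 : ℝ) ^ (-x) ≠ 0 := by linarith
  have hnp1 : (1:ℝ) - p ≠ 0 := by linarith
  field_simp
  ring

/-- For every fixed `x ∈ (0,1)` and `y ∈ (0,1/2)`:
`|∂G/∂y'|_{y'=y_{(x)}}| ≤ (1/2) log(2(1-y)) + x log 4 / (2^{2-x} - 2)`. -/
theorem Gfun_deriv_y'_pointwise_bound (y x : ℝ) (hy0 : 0 < y) (hy : y < 1 / 2)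
    (hx : x ∈ Set.Ioo (0 : ℝ) 1) :
    |deriv (fun t => Gfun y t x) (yOf y x)|
      ≤ 1 / 2 * Real.log (2 * (1 - y)) + x * Real.log 4 / ((2 : ℝ) ^ (2 - x) - 2) := by
  obtain ⟨hx0, hx1⟩ := hx
  have hy1 : y < 1 := by linarith
  have h1y : 0 < 1 - y := by linarith
  set q : ℝ := (2 : ℝ) ^ (1 - x) with hqdef
  have hq0 : 0 < q := Real.rpow_pos_of_pos two_pos _
  have hq1 : 1 < q :=
    (Real.one_lt_rpow_iff_of_pos two_pos).2 (Or.inl ⟨one_lt_two, by linarith⟩)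
  have hq2 : q < 2 := by
    have : (2:ℝ) ^ (1 - x) < (2:ℝ) ^ (1:ℝ) :=
      (Real.rpow_lt_rpow_left_iff one_lt_two).2 (by linarith)
    rwa [Real.rpow_one] at this
  have hlogq : Real.log q = (1 - x) * Real.log 2 := Real.log_rpow two_pos _
  have hpdef : yOf y x = y + (1 - y) * (q - 1) := by simp only [yOf, hqdef]
  set p : ℝ := yOf y x with hpd
  have hpy : y < p := by rw [hpdef]; nlinarith
  have hp0 : 0 < p := hy0.trans hpy
  have hpq : p ≤ (1 - y) * q := by rw [hpdef]; nlinarith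
  have hD := Gfun_hasDerivAt y x hy0 hy hx0 hx1
  rw [hD.deriv]
  have hVnn : 0 ≤ 1 / 2 * (Real.log (1 - y) + Real.log ((2:ℝ) ^ (1 - x)) - Real.log p) := by
    have h1 : Real.log p ≤ Real.log ((1 - y) * q) := Real.log_le_log hp0 hpq
    rw [Real.log_mul h1y.ne' hq0.ne'] at h1
    rw [← hqdef]
    linarith
  rw [← hqdef, abs_of_nonneg hVnn]
  set t₀ : ℝ := q - 1 with ht₀def
  have ht₀0 : 0 < t₀ := by rw [ht₀def]; linarith
  have ht₀1 : t₀ ≤ 1 := by rw [ht₀def]; linarith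
  have h2x : (2 : ℝ) ^ (2 - x) = 2 * q := by
    rw [show (2:ℝ) - x = 1 + (1 - x) by ring, Real.rpow_add two_pos, Real.rpow_one, hqdef]
  have hlog4 : Real.log 4 = 2 * Real.log 2 := by
    rw [show (4:ℝ) = 2 * 2 by norm_num, Real.log_mul two_ne_zero two_ne_zero]; ring
  have hRW : x * Real.log 4 / ((2 : ℝ) ^ (2 - x) - 2) = x * Real.log 2 / t₀ := by
    rw [h2x, hlog4, ht₀def, show 2 * q - 2 = (q - 1) * 2 by ring,
      show x * (2 * Real.log 2) = x * Real.log 2 * 2 by ring,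
      mul_div_mul_right _ _ (two_ne_zero)]
  rw [hRW, Real.log_mul two_ne_zero h1y.ne']
  have hkey := key_ineq ht₀0 ht₀1
  rw [show (1:ℝ) + t₀ = q from by rw [ht₀def]; ring] at hkey
  have hkey' : -(t₀ * Real.log t₀) ≤ (t₀ + 2) * (x * Real.log 2) := by
    refine hkey.trans_eq ?_
    rw [hlogq]; ring
  have hpt : t₀ ≤ p := by rw [hpdef, ht₀def]; nlinarith
  have hlogpt : Real.log t₀ ≤ Real.log p := Real.log_le_log ht₀0 hpt
  have hmul : t₀ * -Real.log p ≤ t₀ * -Real.log t₀ :=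
    mul_le_mul_of_nonneg_left (by linarith) ht₀0.le
  rw [← sub_le_iff_le_add', le_div_iff₀ ht₀0, hlogq]
  clear_value t₀ p q
  linarith [hkey', hmul]
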